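/- arXiv:1510.00692 — 4 statements merged into one kernel-verified Lean document; each statement's English description precedes it below -/
import Mathlib

section
/- For all g, s ∈ ℝ\{0} with s(g−1) + 1 ≠ 0, one has the identity i(g)·j(s) = j(α_g(s))·i(β_s(g)) in G; explicitly, (g, g−1)·(s, 0) = (α_g(s), 0)·(β_s(g), β_s(g) − 1), where α_g(s) = gs/(s(g−1)+1) and β_s(g) = s(g−1)+1. -/
/-- Multiplication on `G = {(a,b) ∈ ℝ² : a ≠ 0}`: `(a,b)·(c,d) = (ac, d + cb)`. -/
def Gmul (p q : ℝ × ℝ) : ℝ × ℝ := (p.1 * q.1, q.2 + q.1 * p.2)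

/-- `i(g) = (g, g − 1)`. -/
def imap (g : ℝ) : ℝ × ℝ := (g, g - 1)

/-- `j(s) = (s, 0)`. -/
def jmap (s : ℝ) : ℝ × ℝ := (s, 0)

/-- For `g, s ∈ ℝ\{0}` with `s(g−1)+1 ≠ 0`, one has `i(g)·j(s) = j(α_g(s))·i(β_s(g))`
where `α_g(s) = gs/(s(g−1)+1)` and `β_s(g) = s(g−1)+1`. -/
theorem stmt_1 (g s : ℝ) (hg : g ≠ 0) (hs : s ≠ 0) (h : s * (g - 1) + 1 ≠ 0) :
    Gmul (imap g) (jmap s) =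
      Gmul (jmap (g * s / (s * (g - 1) + 1))) (imap (s * (g - 1) + 1)) := by
  unfold Gmul imap jmap
  ext <;> simp <;> field_simp <;> ring
end

section
/- For all g, s, h ∈ ℝ\{0} such that h(s−1) + 1 ≠ 0 and h(gs−1) + 1 ≠ 0, one has α_{gs}(h) = α_g(α_s(h)), i.e. (gs)h/(h(gs−1)+1) = g·α_s(h)/(α_s(h)(g−1)+1) where α_s(h) = sh/(h(s−1)+1); in particular the denominator α_s(h)(g−1)+1 is nonzero under these hypotheses. -/
/-- For `g, s, h ∈ ℝ\{0}` with `h(s−1)+1 ≠ 0` and `h(gs−1)+1 ≠ 0`,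
one has `α_{gs}(h) = α_g(α_s(h))` where `α_g(s) = gs/(s(g−1)+1)`;
in particular the denominator `α_s(h)(g−1)+1` is nonzero. -/
theorem stmt_2 (g s h : ℝ) (hg : g ≠ 0) (hs : s ≠ 0) (hh : h ≠ 0)
    (h1 : h * (s - 1) + 1 ≠ 0) (h2 : h * (g * s - 1) + 1 ≠ 0) :
    (s * h / (h * (s - 1) + 1)) * (g - 1) + 1 ≠ 0 ∧
    (g * s) * h / (h * (g * s - 1) + 1) =
      g * (s * h / (h * (s - 1) + 1)) /
        ((s * h / (h * (s - 1) + 1)) * (g - 1) + 1) := by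
  have key : (s * h / (h * (s - 1) + 1)) * (g - 1) + 1
      = (h * (g * s - 1) + 1) / (h * (s - 1) + 1) := by
    field_simp
    ring
  have hne : (s * h / (h * (s - 1) + 1)) * (g - 1) + 1 ≠ 0 := by
    rw [key]; exact div_ne_zero h2 h1
  refine ⟨hne, ?_⟩
  rw [key]
  field_simp
end

section
/- For all g, h, t ∈ ℝ\{0} with t(g−1) + 1 ≠ 0 and ht(g−1) + 1 ≠ 0, one has the compatibility relation α_g(ht) = α_{β_t(g)}(h)·α_g(t), i.e. g(ht)/(ht(g−1)+1) = (β_t(g)·h/(h(β_t(g)−1)+1))·(gt/(t(g−1)+1)), where α_g(s) = gs/(s(g−1)+1) and β_t(g) = t(g−1)+1. -/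
/-- For `g, h, t ∈ ℝ\{0}` with `t(g−1)+1 ≠ 0` and `ht(g−1)+1 ≠ 0`, one has
`α_g(ht) = α_{β_t(g)}(h)·α_g(t)`, where `α_g(s) = gs/(s(g−1)+1)` and
`β_t(g) = t(g−1)+1`. -/
theorem stmt_5 (g h t : ℝ) (hg : g ≠ 0) (hh : h ≠ 0) (ht : t ≠ 0)
    (h1 : t * (g - 1) + 1 ≠ 0) (h2 : h * t * (g - 1) + 1 ≠ 0) :
    g * (h * t) / ((h * t) * (g - 1) + 1) =
      ((t * (g - 1) + 1) * h / (h * ((t * (g - 1) + 1) - 1) + 1)) *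
        (g * t / (t * (g - 1) + 1)) := by
  rw [show h * ((t * (g - 1) + 1) - 1) + 1 = h * t * (g - 1) + 1 by ring,
    show (h * t) * (g - 1) + 1 = h * t * (g - 1) + 1 by ring,
    div_mul_div_comm, div_eq_div_iff h2 (by exact mul_ne_zero h2 h1)]
  ring
end

section
/- For all a, c > 0 and b, d, x ∈ ℝ with c + dx > 0 and ac + (ad + b/c)x > 0, one has β_x((a,b)·(c,d)) = β_{α_{(c,d)}(x)}(a,b) · β_x(c,d) in G₁; explicitly, writing x' = x/(c(c+dx)), one has (ac + (ad+b/c)x, ad + b/c) = (a + bx', b)·(c + dx, d), where the product on the right is the G₁-multiplication (p,q)·(r,s) = (pr, ps + q/r); in particular a + bx' > 0 under these hypotheses. -/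
/-- Multiplication on `G₁ = {(a,b) ∈ ℝ² : a > 0}`: `(p,q)·(r,s) = (pr, ps + q/r)`. -/
noncomputable def G1mul (p q : ℝ × ℝ) : ℝ × ℝ := (p.1 * q.1, p.1 * q.2 + p.2 / q.1)

/-- For `a, c > 0` and `b, d, x ∈ ℝ` with `c + dx > 0` and `ac + (ad + b/c)x > 0`,
one has `β_x((a,b)·(c,d)) = β_{α_{(c,d)}(x)}(a,b)·β_x(c,d)` in `G₁`; explicitly,
with `x' = x/(c(c+dx))`, `(ac + (ad+b/c)x, ad + b/c) = (a + bx', b)·(c + dx, d)`;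
in particular `a + bx' > 0`. -/
theorem stmt_13 (a c b d x : ℝ) (ha : 0 < a) (hc : 0 < c)
    (h1 : 0 < c + d * x) (h2 : 0 < a * c + (a * d + b / c) * x) :
    0 < a + b * (x / (c * (c + d * x))) ∧
    (a * c + (a * d + b / c) * x, a * d + b / c) =
      G1mul (a + b * (x / (c * (c + d * x))), b) (c + d * x, d) := by
  have hc' : c ≠ 0 := ne_of_gt hc
  have h1' : c + d * x ≠ 0 := ne_of_gt h1
  have key : a + b * (x / (c * (c + d * x))) =
      (a * c + (a * d + b / c) * x) / (c + d * x) := by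
    rw [← div_div, eq_div_iff h1', add_mul, mul_assoc b, div_mul_cancel₀ _ h1']
    ring
  constructor
  · rw [key]
    exact div_pos h2 h1
  · simp only [G1mul, Prod.mk.injEq]
    constructor
    · rw [key, div_mul_cancel₀ _ h1']
    · rw [key]
      field_simp
      ring
end
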